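/- Let m ∈ ℕ and let h̃ : ℝ^m → ℂ be a measurable function such that ω ↦ e^{‖ω‖²/2} h̃(ω) is integrable (hence h̃ itself is integrable). Define h(u) := (2π)^{-m} ∫ e^{i⟨ω,u⟩} h̃(ω) dω and g(u) := (2π)^{-m} ∫ e^{i⟨ω,u⟩} e^{‖ω‖²/2} h̃(ω) dω. Then for every u ∈ ℝ^m, with U of law N(u, I_m): E[g(U)] = h(u). That is, g = E_{-1}h is a genuine inverse of the Gaussian smoothing operator: E₁(E₁^{-1}h) = h. -/

import Mathlib

open MeasureTheory ProbabilityTheory Set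
open scoped NNReal ENNReal

/-- The Gaussian measure `N(μ, σ² I_m)` on `ℝ^m` as a product of one-dimensional
Gaussian measures. -/
noncomputable def gaussianPi {m : ℕ} (μ : Fin m → ℝ) (v : ℝ≥0) :
    Measure (Fin m → ℝ) :=
  Measure.pi fun i => gaussianReal (μ i) v

/-- The inverse Fourier transform with the angular-frequency convention
`(F⁻¹ f̃)(u) = (2π)^{-m} ∫ e^{i⟨ω,u⟩} f̃(ω) dω`. -/
noncomputable def Finv {m : ℕ} (f : (Fin m → ℝ) → ℂ) (u : Fin m → ℝ) : ℂ :=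
  (((2 * Real.pi) ^ m)⁻¹ : ℝ) •
    ∫ ω : Fin m → ℝ, Complex.exp (Complex.I * ((∑ i, ω i * u i : ℝ) : ℂ)) * f ω

lemma norm_cexp_I_mul (r : ℝ) : ‖Complex.exp (Complex.I * r)‖ = 1 := by
  simp [Complex.norm_exp]

lemma charGauss1 (u0 w : ℝ) :
    ∫ x : ℝ, Complex.exp (Complex.I * (w * x)) ∂(gaussianReal u0 1)
      = Complex.exp (Complex.I * (w * u0) - ((w : ℂ)) ^ 2 / 2) := by
  rw [gaussianReal_of_var_ne_zero _ one_ne_zero]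
  have hpdf : Measurable fun x => (gaussianPDFReal u0 1 x).toNNReal :=
    (measurable_gaussianPDFReal u0 1).real_toNNReal
  have hden : gaussianPDF u0 1 = fun x => ((gaussianPDFReal u0 1 x).toNNReal : ℝ≥0∞) := rfl
  rw [hden, integral_withDensity_eq_integral_smul hpdf]
  have h1 : ∀ x : ℝ, (gaussianPDFReal u0 1 x).toNNReal • Complex.exp (Complex.I * (w * x))
      = (Real.sqrt (2 * Real.pi) : ℂ)⁻¹ *
        Complex.exp ((-(1/2) : ℂ) * (x:ℂ) ^ 2 + ((u0 : ℂ) + Complex.I * w) * x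
          + (-((u0:ℂ)^2)/2)) := by
    intro x
    rw [NNReal.smul_def, Real.coe_toNNReal _ (gaussianPDFReal_nonneg u0 1 x),
      gaussianPDFReal, Complex.real_smul]
    push_cast
    rw [mul_one, mul_assoc, ← Complex.exp_add]
    congr 1
    push_cast
    ring
  simp_rw [h1]
  rw [integral_const_mul, integral_cexp_quadratic (by norm_num : (-(1/2):ℂ).re < 0)]
  have h2 : ((Real.pi : ℂ) / -(-(1/2))) = ((2 * Real.pi : ℝ) : ℂ) := by push_cast; ring
  have h3 : ((2 * Real.pi : ℝ) : ℂ) ^ (1/2 : ℂ) = (Real.sqrt (2 * Real.pi) : ℂ) := by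
    rw [show ((1:ℂ)/2) = ((1/2 : ℝ) : ℂ) by norm_num,
      ← Complex.ofReal_cpow (by positivity), Complex.ofReal_inj, Real.sqrt_eq_rpow]
  have h4 : (-((u0:ℂ)^2)/2 - ((u0:ℂ) + Complex.I*w)^2/(4 * (-(1/2))))
      = Complex.I * (w * u0) - ((w:ℂ))^2/2 := by
    linear_combination ((w:ℂ)^2/2) * Complex.I_sq
  rw [h2, h3, h4, ← mul_assoc, inv_mul_cancel₀, one_mul]
  exact_mod_cast Real.sqrt_ne_zero'.2 (by positivity)

lemma charGaussPi {m : ℕ} (u w : Fin m → ℝ) :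
    ∫ x, Complex.exp (Complex.I * ((∑ i, w i * x i : ℝ) : ℂ)) ∂(gaussianPi u 1)
      = Complex.exp (Complex.I * ((∑ i, w i * u i : ℝ) : ℂ)) *
          Complex.exp (-(((∑ i, w i ^ 2 : ℝ) : ℂ) / 2)) := by
  have key := MeasureTheory.integral_fintype_prod_eq_prod (E := fun _ : Fin m => ℝ)
      (fun i x => Complex.exp (Complex.I * (w i * x)))
      (μ := fun _i => gaussianReal (u _i) 1)
  calc ∫ x, Complex.exp (Complex.I * ((∑ i, w i * x i : ℝ) : ℂ)) ∂(gaussianPi u 1)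
      = ∫ x, ∏ i, Complex.exp (Complex.I * (w i * x i)) ∂(gaussianPi u 1) := by
        congr 1; funext x
        rw [Complex.ofReal_sum, Finset.mul_sum, Complex.exp_sum]
        push_cast; rfl
    _ = ∏ i, ∫ x, Complex.exp (Complex.I * (w i * x)) ∂(gaussianReal (u i) 1) := key
    _ = ∏ i, Complex.exp (Complex.I * (w i * u i) - ((w i : ℂ)) ^ 2 / 2) :=
        Finset.prod_congr rfl fun i _ => charGauss1 (u i) (w i)
    _ = _ := by
        rw [← Complex.exp_sum, ← Complex.exp_add]
        congr 1
        push_cast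
        rw [Finset.sum_sub_distrib, Finset.mul_sum, Finset.sum_div]
        ring

/-- Deconvolution of Gaussian smoothing: if `e^{‖ω‖²/2} h̃(ω)` is integrable then
`h̃` is integrable, and with `h = F⁻¹ h̃` and `g = F⁻¹[e^{‖ω‖²/2} h̃]`, Gaussian
smoothing recovers `h`: `E[g(U)] = h(u)` for `U ~ N(u, I_m)`; i.e. `g = E₋₁h`
satisfies `E₁(E₁⁻¹ h) = h`. -/
theorem stmt_15 (m : ℕ) (ht : (Fin m → ℝ) → ℂ) (hmeas : Measurable ht)
    (hint : Integrable (fun ω : Fin m → ℝ =>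
      Real.exp ((∑ i, ω i ^ 2) / 2) • ht ω)) :
    Integrable ht ∧
    ∀ u : Fin m → ℝ,
      ∫ x, Finv (fun ω : Fin m → ℝ => Real.exp ((∑ i, ω i ^ 2) / 2) • ht ω) x
          ∂(gaussianPi u 1)
        = Finv ht u := by
  set g : (Fin m → ℝ) → ℂ := fun ω => Real.exp ((∑ i, ω i ^ 2) / 2) • ht ω with hgdef
  have hS : ∀ ω : Fin m → ℝ, (0:ℝ) ≤ (∑ i, ω i ^ 2) / 2 := fun ω => by positivity
  have hsum : Measurable fun ω : Fin m → ℝ => (∑ i, ω i ^ 2) / 2 :=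
    (Finset.measurable_sum _ fun i _ => (measurable_pi_apply i).pow_const 2).div_const 2
  have hgmeas : Measurable g := (hsum.exp).smul hmeas
  have hnormg : ∀ ω, ‖g ω‖ = Real.exp ((∑ i, ω i ^ 2) / 2) * ‖ht ω‖ := fun ω => by
    rw [hgdef, norm_smul, Real.norm_eq_abs, _root_.abs_of_nonneg (Real.exp_nonneg _)]
  have htInt : Integrable ht := by
    refine hint.norm.mono' hmeas.aestronglyMeasurable (ae_of_all _ fun ω => ?_)
    rw [hnormg]
    calc ‖ht ω‖ = 1 * ‖ht ω‖ := (one_mul _).symm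
    _ ≤ Real.exp ((∑ i, ω i ^ 2) / 2) * ‖ht ω‖ :=
        mul_le_mul_of_nonneg_right (Real.one_le_exp (hS ω)) (norm_nonneg _)
  refine ⟨htInt, fun u => ?_⟩
  haveI : IsProbabilityMeasure (gaussianPi u 1) := by
    unfold gaussianPi; infer_instance
  simp only [Finv]
  rw [integral_smul]
  congr 1
  -- measurability of the product integrand
  have hFmeas : Measurable fun p : (Fin m → ℝ) × (Fin m → ℝ) =>
      Complex.exp (Complex.I * ((∑ i, p.2 i * p.1 i : ℝ) : ℂ)) * g p.2 := by
    have h1 : Measurable fun p : (Fin m → ℝ) × (Fin m → ℝ) => (∑ i, p.2 i * p.1 i : ℝ) :=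
      Finset.measurable_sum _ fun i _ =>
        ((measurable_pi_apply i).comp measurable_snd).mul
          ((measurable_pi_apply i).comp measurable_fst)
    exact (Complex.measurable_exp.comp
      ((Complex.measurable_ofReal.comp h1).const_mul Complex.I)).mul
      (hgmeas.comp measurable_snd)
  have hfix : ∀ x : Fin m → ℝ,
      Integrable fun ω => Complex.exp (Complex.I * ((∑ i, ω i * x i : ℝ) : ℂ)) * g ω := by
    intro x
    refine hint.norm.mono' ?_ (ae_of_all _ fun ω => ?_)
    · exact (hFmeas.comp (measurable_const.prodMk measurable_id)).aestronglyMeasurable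
    · rw [norm_mul, norm_cexp_I_mul, one_mul]
  have hprod : Integrable (Function.uncurry fun (x ω : Fin m → ℝ) =>
      Complex.exp (Complex.I * ((∑ i, ω i * x i : ℝ) : ℂ)) * g ω)
      ((gaussianPi u 1).prod volume) := by
    refine (integrable_prod_iff hFmeas.aestronglyMeasurable).2
      ⟨ae_of_all _ fun x => hfix x, ?_⟩
    have : (fun x : Fin m → ℝ =>
        ∫ ω, ‖Complex.exp (Complex.I * ((∑ i, ω i * x i : ℝ) : ℂ)) * g ω‖)
        = fun _ => ∫ ω, ‖g ω‖ := by
      funext x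
      simp only [norm_mul, norm_cexp_I_mul, one_mul]
    rw [this]
    exact integrable_const _
  rw [MeasureTheory.integral_integral_swap hprod]
  refine integral_congr_ae (ae_of_all _ fun ω => ?_)
  show ∫ x, Complex.exp (Complex.I * ((∑ i, ω i * x i : ℝ) : ℂ)) * g ω ∂(gaussianPi u 1)
      = Complex.exp (Complex.I * ((∑ i, ω i * u i : ℝ) : ℂ)) * ht ω
  rw [integral_mul_const, charGaussPi u ω, hgdef]
  simp only
  rw [Complex.real_smul, Complex.ofReal_exp]
  push_cast
  rw [mul_assoc, ← mul_assoc (Complex.exp (-((∑ i, (ω i : ℂ) ^ 2) / 2))),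
    ← Complex.exp_add, neg_add_cancel, Complex.exp_zero, one_mul]
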